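/- Let F(x,X) be the determinant of the 5×5 matrix whose i-th column is (1, xᵢ², xᵢ⁴, xᵢXᵢ, Xᵢ²). For all x₁,…,x₅ ∈ ℂ, all signs ε₁,…,ε₅ ∈ {+1,−1} and all μ, λ ∈ ℂ, one has F(x₁,…,x₅, ε₁(μ+λx₁²), ε₂(μ+λx₂²), ε₃(μ+λx₃²), ε₄(μ+λx₄²), ε₅(μ+λx₅²)) = 0. (Hence for each x, the 16 projective lines in ℙ(ℂ⁵/⟨x⟩) spanned by the images of (ε₁,…,ε₅) and (ε₁x₁²,…,ε₅x₅²) all lie on the cubic surface F(x,·)=0.) -/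
import Mathlib

/-- The determinant `F(x,X)` of the 5×5 matrix whose `i`-th column is
`(1, xᵢ², xᵢ⁴, xᵢXᵢ, Xᵢ²)`. -/
noncomputable def F (x X : Fin 5 → ℂ) : ℂ :=
  Matrix.det (Matrix.of fun (i j : Fin 5) =>
    ![(1 : ℂ), x j ^ 2, x j ^ 4, x j * X j, X j ^ 2] i)

/-- For any signs `εᵢ = ±1` and all `μ, λ ∈ ℂ`,
`F(x, (ε₁(μ+λx₁²),…,ε₅(μ+λx₅²))) = 0`: the 16 lines in the `W(D₅)`-orbit
of `b₆` lie on the cubic surface `F(x,·) = 0`. -/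
theorem lines_b6_orbit_on_cubic (x ε : Fin 5 → ℂ)
    (hε : ∀ i, ε i = 1 ∨ ε i = -1) (μ l : ℂ) :
    F x (fun i => ε i * (μ + l * x i ^ 2)) = 0 := by
  rw [F, ← Matrix.exists_vecMul_eq_zero_iff]
  refine ⟨![μ ^ 2, 2 * μ * l, l ^ 2, 0, -1], ?_, ?_⟩
  · intro h
    have := congrFun h 4
    simp at this
  · funext j
    have hε2 : ε j ^ 2 = 1 := by rcases hε j with h | h <;> simp [h]
    simp [Matrix.vecMul, dotProduct, Fin.sum_univ_five]
    ring_nf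
    rw [← sub_eq_zero]
    ring_nf
    rw [hε2]
    ring
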